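/- Suppose (λ,(U^x)) is a natural left absorber in a Hilbert space tensor category C. Then U^λ ∈ U(H^λ⊗H^λ) is an antimultiplicative unitary: U^λ₁₂U^λ₂₃ = U^λ₂₃U^λ₁₃U^λ₁₂; and for every object x, U^x ∈ U(H^λ⊗H^x) satisfies U^x₂₃U^x₁₃U^λ₁₂ = U^λ₁₂U^x₂₃ (left representation of the antimultiplicative unitary). -/
import Mathlib


noncomputable section
open scoped TensorProduct

namespace MU

variable {A B M R : Type*}
  [AddCommMonoid A] [Module ℂ A] [AddCommMonoid B] [Module ℂ B]
  [AddCommMonoid M] [Module ℂ M] [AddCommMonoid R] [Module ℂ R]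

/-- Extend an endomorphism of `A ⊗ B` to `A ⊗ (B ⊗ R)`, acting trivially on the tail `R`.
This realises the leg numbering `T₁₂`. -/
def endTail (T : (A ⊗[ℂ] B) ≃ₗ[ℂ] (A ⊗[ℂ] B)) :
    (A ⊗[ℂ] (B ⊗[ℂ] R)) ≃ₗ[ℂ] (A ⊗[ℂ] (B ⊗[ℂ] R)) :=
  (TensorProduct.assoc ℂ A B R).symm ≪≫ₗ
    TensorProduct.congr T (LinearEquiv.refl ℂ R) ≪≫ₗ TensorProduct.assoc ℂ A B R

/-- Exchange the first tensor factor with the second one. -/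
def exch : (A ⊗[ℂ] (B ⊗[ℂ] M)) ≃ₗ[ℂ] (B ⊗[ℂ] (A ⊗[ℂ] M)) :=
  (TensorProduct.assoc ℂ A B M).symm ≪≫ₗ
    TensorProduct.congr (TensorProduct.comm ℂ A B) (LinearEquiv.refl ℂ M) ≪≫ₗ
    TensorProduct.assoc ℂ B A M

/-- Let an endomorphism of `A ⊗ M` act on `A ⊗ (B ⊗ M)`, skipping the middle leg `B`. -/
def stepMid (T : (A ⊗[ℂ] M) ≃ₗ[ℂ] (A ⊗[ℂ] M)) :
    (A ⊗[ℂ] (B ⊗[ℂ] M)) ≃ₗ[ℂ] (A ⊗[ℂ] (B ⊗[ℂ] M)) :=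
  exch ≪≫ₗ TensorProduct.congr (LinearEquiv.refl ℂ B) T ≪≫ₗ exch

/-- Let an endomorphism of `M` act on `A ⊗ M`, acting trivially on the new leftmost leg. -/
def extL (T : M ≃ₗ[ℂ] M) : (A ⊗[ℂ] M) ≃ₗ[ℂ] (A ⊗[ℂ] M) :=
  TensorProduct.congr (LinearEquiv.refl ℂ A) T

end MU

universe u

/-- A (strict) Hilbert space tensor category, encoded concretely: objects are
ℂ-modules equipped with an extra structure `S`, arrows are the linear maps
satisfying the predicate `IsHom`, the monoidal structure is induced by the tensor
product of the underlying spaces (so the forgetful functor is strict monoidal), and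
`triv` is the strict monoidal section `τ` equipping a space with the trivial
structure (every linear map is an arrow between trivial objects). -/
structure HSTC : Type (u + 1) where
  /-- the extra structure making a ℂ-module into an object of the category -/
  S : ∀ (X : Type u) [AddCommGroup X] [Module ℂ X], Type u
  /-- the arrows of the category, as a predicate on linear maps -/
  IsHom : ∀ {X Y : Type u} [AddCommGroup X] [Module ℂ X] [AddCommGroup Y] [Module ℂ Y],
    S X → S Y → (X →ₗ[ℂ] Y) → Prop
  isHom_id : ∀ {X : Type u} [AddCommGroup X] [Module ℂ X] (s : S X),
    IsHom s s LinearMap.id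
  isHom_comp : ∀ {X Y Z : Type u} [AddCommGroup X] [Module ℂ X] [AddCommGroup Y]
    [Module ℂ Y] [AddCommGroup Z] [Module ℂ Z] (s : S X) (t : S Y) (u : S Z)
    (f : X →ₗ[ℂ] Y) (g : Y →ₗ[ℂ] Z), IsHom s t f → IsHom t u g → IsHom s u (g ∘ₗ f)
  /-- the tensor product of objects -/
  tenS : ∀ {X Y : Type u} [AddCommGroup X] [Module ℂ X] [AddCommGroup Y] [Module ℂ Y],
    S X → S Y → S (X ⊗[ℂ] Y)
  /-- the trivial structure: the strict monoidal functor `τ : Hilb → C` -/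
  triv : ∀ (X : Type u) [AddCommGroup X] [Module ℂ X], S X
  /-- every bounded linear map is an arrow between trivial objects -/
  triv_isHom : ∀ {X Y : Type u} [AddCommGroup X] [Module ℂ X] [AddCommGroup Y]
    [Module ℂ Y] (f : X →ₗ[ℂ] Y), IsHom (triv X) (triv Y) f
  /-- the tensor product of arrows is an arrow -/
  ten_isHom : ∀ {X X' Y Y' : Type u} [AddCommGroup X] [Module ℂ X] [AddCommGroup X']
    [Module ℂ X'] [AddCommGroup Y] [Module ℂ Y] [AddCommGroup Y'] [Module ℂ Y']
    (s : S X) (s' : S X') (t : S Y) (t' : S Y') (f : X →ₗ[ℂ] X') (g : Y →ₗ[ℂ] Y'),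
    IsHom s s' f → IsHom t t' g → IsHom (tenS s t) (tenS s' t') (TensorProduct.map f g)
  /-- `τ` is a strict tensor functor -/
  triv_tenS : ∀ (X Y : Type u) [AddCommGroup X] [Module ℂ X] [AddCommGroup Y]
    [Module ℂ Y], tenS (triv X) (triv Y) = triv (X ⊗[ℂ] Y)
  /-- the associators of the category are mapped to the canonical ones -/
  assoc_isHom : ∀ {X Y Z : Type u} [AddCommGroup X] [Module ℂ X] [AddCommGroup Y]
    [Module ℂ Y] [AddCommGroup Z] [Module ℂ Z] (s : S X) (t : S Y) (u : S Z),
    IsHom (tenS (tenS s t) u) (tenS s (tenS t u))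
      (TensorProduct.assoc ℂ X Y Z).toLinearMap
  assoc_symm_isHom : ∀ {X Y Z : Type u} [AddCommGroup X] [Module ℂ X] [AddCommGroup Y]
    [Module ℂ Y] [AddCommGroup Z] [Module ℂ Z] (s : S X) (t : S Y) (u : S Z),
    IsHom (tenS s (tenS t u)) (tenS (tenS s t) u)
      ((TensorProduct.assoc ℂ X Y Z).symm : X ⊗[ℂ] (Y ⊗[ℂ] Z) →ₗ[ℂ] (X ⊗[ℂ] Y) ⊗[ℂ] Z)
  /-- the flip over a trivial object comes from an arrow (Lemma 2.5 of the paper) -/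
  flip_triv_isHom : ∀ {X Y : Type u} [AddCommGroup X] [Module ℂ X] [AddCommGroup Y]
    [Module ℂ Y] (s : S X),
    IsHom (tenS s (triv Y)) (tenS (triv Y) s) (TensorProduct.comm ℂ X Y).toLinearMap

/-- A natural left absorber `(λ, (Uˣ)ₓ)` in a Hilbert space tensor category `C`:
unitaries `Uˣ : λ ⊗ x → λ ⊗ τ(x)` (described on the underlying spaces `Λ ⊗ X`),
natural in `x`, and antimultiplicative: `U^{x₁ ⊗ x₂} = U^{x₂}₁₃ U^{x₁}₁₂`. -/
structure NLA (C : HSTC.{u}) (Λ : Type u) [AddCommGroup Λ] [Module ℂ Λ] where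
  /-- the structure of the absorbing object `λ` on the space `Λ` -/
  slam : C.S Λ
  /-- the absorbing unitaries `Uˣ`, at the level of the underlying spaces -/
  U : ∀ (X : Type u) [AddCommGroup X] [Module ℂ X], C.S X →
    ((Λ ⊗[ℂ] X) ≃ₗ[ℂ] (Λ ⊗[ℂ] X))
  /-- each `Uˣ` is an arrow `λ ⊗ x → λ ⊗ τ(x)` in `C` -/
  U_isHom : ∀ (X : Type u) [AddCommGroup X] [Module ℂ X] (s : C.S X),
    C.IsHom (C.tenS slam s) (C.tenS slam (C.triv X)) (U X s).toLinearMap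
  /-- naturality of the `Uˣ` -/
  U_natural : ∀ {X Y : Type u} [AddCommGroup X] [Module ℂ X] [AddCommGroup Y]
    [Module ℂ Y] (s : C.S X) (t : C.S Y) (a : X →ₗ[ℂ] Y), C.IsHom s t a →
    TensorProduct.map LinearMap.id a ∘ₗ (U X s).toLinearMap
      = (U Y t).toLinearMap ∘ₗ TensorProduct.map LinearMap.id a
  /-- multiplicativity: `U^{x₁ ⊗ x₂} = U^{x₂}₁₃ U^{x₁}₁₂` -/
  U_mult : ∀ (X Y : Type u) [AddCommGroup X] [Module ℂ X] [AddCommGroup Y]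
    [Module ℂ Y] (s : C.S X) (t : C.S Y),
    U (X ⊗[ℂ] Y) (C.tenS s t)
      = MU.endTail (U X s) ≪≫ₗ MU.stepMid (U Y t)


namespace MUAux

open MU TensorProduct

variable {A B M R : Type*}
  [AddCommMonoid A] [Module ℂ A] [AddCommMonoid B] [Module ℂ B]
  [AddCommMonoid M] [Module ℂ M] [AddCommMonoid R] [Module ℂ R]

@[simp] lemma exch_tmul (a : A) (b : B) (m : M) :
    (MU.exch (a ⊗ₜ[ℂ] (b ⊗ₜ[ℂ] m)) : B ⊗[ℂ] (A ⊗[ℂ] M)) = b ⊗ₜ (a ⊗ₜ m) := by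
  simp [MU.exch]

@[simp] lemma endTail_tmul (T : (A ⊗[ℂ] B) ≃ₗ[ℂ] (A ⊗[ℂ] B)) (a : A) (b : B) (r : R) :
    (endTail T (a ⊗ₜ[ℂ] (b ⊗ₜ[ℂ] r)))
      = TensorProduct.assoc ℂ A B R (T (a ⊗ₜ b) ⊗ₜ r) := by
  simp [MU.endTail]

lemma stepMid_tmul (T : (A ⊗[ℂ] M) ≃ₗ[ℂ] (A ⊗[ℂ] M)) (a : A) (b : B) (m : M) :
    (stepMid T (a ⊗ₜ[ℂ] (b ⊗ₜ[ℂ] m)) : A ⊗[ℂ] (B ⊗[ℂ] M))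
      = MU.exch (b ⊗ₜ T (a ⊗ₜ m)) := by
  simp [MU.stepMid]

@[simp] lemma extL_tmul (T : M ≃ₗ[ℂ] M) (a : A) (m : M) :
    (extL T (a ⊗ₜ[ℂ] m)) = a ⊗ₜ T m := by
  simp [MU.extL]

lemma stepMid_refl : stepMid (LinearEquiv.refl ℂ (A ⊗[ℂ] M))
    = LinearEquiv.refl ℂ (A ⊗[ℂ] (B ⊗[ℂ] M)) := by
  apply LinearEquiv.toLinearMap_injective
  apply TensorProduct.ext'
  intro a y
  induction y using TensorProduct.induction_on with
  | zero => simp [tmul_zero]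
  | tmul b m => simp [stepMid_tmul]
  | add y₁ y₂ h₁ h₂ => simp only [tmul_add, map_add] at h₁ h₂ ⊢; rw [h₁, h₂]

lemma exch_symm_tmul (b : B) (a : A) (m : M) :
    ((MU.exch : (A ⊗[ℂ] (B ⊗[ℂ] M)) ≃ₗ[ℂ] (B ⊗[ℂ] (A ⊗[ℂ] M))).symm (b ⊗ₜ (a ⊗ₜ m)))
      = a ⊗ₜ (b ⊗ₜ m) := by
  rw [LinearEquiv.symm_apply_eq, exch_tmul]

/-- every element of `Λ ⊗ ULift ℂ` is a pure tensor with second leg `up 1` -/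
lemma exists_tmul_up_one (ζ : M ⊗[ℂ] ULift.{v} ℂ) :
    ∃ m : M, ζ = m ⊗ₜ ULift.up (1 : ℂ) := by
  induction ζ using TensorProduct.induction_on with
  | zero => exact ⟨0, by simp⟩
  | tmul m c =>
      refine ⟨c.down • m, ?_⟩
      rw [smul_tmul]
      congr 1
      ext
      simp
  | add x y hx hy =>
      obtain ⟨m₁, rfl⟩ := hx
      obtain ⟨m₂, rfl⟩ := hy
      exact ⟨m₁ + m₂, by rw [add_tmul]⟩

end MUAux

open MUAux in
/-- `U` on a trivial object is the identity. -/
lemma NLA.U_triv (C : HSTC.{u}) {Λ : Type u} [AddCommGroup Λ] [Module ℂ Λ]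
    (B : NLA C Λ) (Y : Type u) [AddCommGroup Y] [Module ℂ Y] :
    B.U Y (C.triv Y) = LinearEquiv.refl ℂ (Λ ⊗[ℂ] Y) := by
  classical
  set X : Type u := ULift.{u} ℂ with hX
  set c₀ : X := ULift.up (1 : ℂ) with hc₀
  set UX := B.U X (C.triv X) with hUX
  set UY := B.U Y (C.triv Y) with hUY
  apply LinearEquiv.toLinearMap_injective
  apply TensorProduct.ext'
  intro l w
  -- the naturality arrow: insert `w` at the end
  set a : X →ₗ[ℂ] (X ⊗[ℂ] Y) := (TensorProduct.mk ℂ X Y).flip w with ha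
  have hnat := B.U_natural (C.triv X) (C.triv (X ⊗[ℂ] Y)) a (C.triv_isHom a)
  rw [← C.triv_tenS X Y, B.U_mult X Y (C.triv X) (C.triv Y)] at hnat
  obtain ⟨m, hm⟩ := exists_tmul_up_one (UX.symm (l ⊗ₜ c₀))
  have hUXm : UX (m ⊗ₜ c₀) = l ⊗ₜ c₀ := by
    rw [← hm, LinearEquiv.apply_symm_apply]
  have hl := LinearMap.congr_fun hnat (m ⊗ₜ[ℂ] c₀)
  simp only [LinearMap.comp_apply, LinearEquiv.coe_coe, TensorProduct.map_tmul,
    LinearMap.id_apply, LinearEquiv.trans_apply, ha, LinearMap.flip_apply,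
    TensorProduct.mk_apply] at hl
  rw [hUXm] at hl
  -- now compute both sides on pure tensors
  have hmap : ∀ (ζ : Λ ⊗[ℂ] X),
      TensorProduct.map LinearMap.id a ζ
        = TensorProduct.assoc ℂ Λ X Y (ζ ⊗ₜ w) := by
    intro ζ
    induction ζ using TensorProduct.induction_on with
    | zero => simp
    | tmul p q => simp [ha]
    | add x y hx hy =>
        simp only [map_add, TensorProduct.add_tmul] at hx hy ⊢
        rw [hx, hy]
  rw [endTail_tmul, hUXm] at hl
  simp only [TensorProduct.map_tmul, LinearMap.id_apply, LinearMap.flip_apply,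
    TensorProduct.mk_apply] at hl
  -- hl : l ⊗ (c₀ ⊗ w) = stepMid UY (assoc ((l ⊗ c₀) ⊗ w))
  rw [show (TensorProduct.assoc ℂ Λ X Y) ((l ⊗ₜ c₀) ⊗ₜ w) = l ⊗ₜ (c₀ ⊗ₜ w) from rfl,
    stepMid_tmul] at hl
  -- hl : l ⊗ (c₀ ⊗ w) = exch (c₀ ⊗ UY (l ⊗ w))
  have h2 : c₀ ⊗ₜ[ℂ] UY (l ⊗ₜ[ℂ] w) = c₀ ⊗ₜ[ℂ] (l ⊗ₜ[ℂ] w) := by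
    have := congrArg
      (MU.exch : (X ⊗[ℂ] (Λ ⊗[ℂ] Y)) ≃ₗ[ℂ] (Λ ⊗[ℂ] (X ⊗[ℂ] Y))).symm hl
    rw [LinearEquiv.symm_apply_apply, exch_symm_tmul] at this
    exact this.symm
  have h3 := congrArg
    ((TensorProduct.congr (ULift.moduleEquiv (R := ℂ) (M := ℂ)) (LinearEquiv.refl ℂ (Λ ⊗[ℂ] Y)))
      ≪≫ₗ TensorProduct.lid ℂ (Λ ⊗[ℂ] Y)) h2
  simpa [hc₀] using h3

open MU MUAux in
lemma left_absorber_key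
    (C : HSTC.{u}) {Λ : Type u} [AddCommGroup Λ] [Module ℂ Λ] (B : NLA C Λ)
    (X : Type u) [AddCommGroup X] [Module ℂ X] (s : C.S X) :
    extL (B.U X s) * stepMid (B.U X s) * endTail (B.U Λ B.slam)
      = endTail (B.U Λ B.slam) * extL (B.U X s) := by
  have hnat := B.U_natural (C.tenS B.slam s) (C.tenS B.slam (C.triv X))
    (B.U X s).toLinearMap (B.U_isHom X s)
  rw [B.U_mult Λ X B.slam s, B.U_mult Λ X B.slam (C.triv X), B.U_triv C X,
    stepMid_refl] at hnat
  apply LinearEquiv.toLinearMap_injective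
  apply LinearMap.ext
  intro z
  have hz := LinearMap.congr_fun hnat z
  simp only [LinearMap.comp_apply, LinearEquiv.coe_coe, LinearEquiv.trans_apply,
    LinearEquiv.refl_apply] at hz
  have hmapid : ∀ (ζ : Λ ⊗[ℂ] (Λ ⊗[ℂ] X)),
      TensorProduct.map LinearMap.id (B.U X s).toLinearMap ζ = extL (B.U X s) ζ := by
    intro ζ; rfl
  rw [hmapid, hmapid] at hz
  show extL (B.U X s) (stepMid (B.U X s) (endTail (B.U Λ B.slam) z))
    = endTail (B.U Λ B.slam) (extL (B.U X s) z)
  exact hz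

open MU in
/-- for a natural left absorber `(λ, U)` in a Hilbert space tensor
category, `U^λ` is an antimultiplicative unitary:
`U^λ₁₂ U^λ₂₃ = U^λ₂₃ U^λ₁₃ U^λ₁₂` on `H^λ ⊗ H^λ ⊗ H^λ`; and every `Uˣ` is a left
representation of it: `Uˣ₂₃ Uˣ₁₃ U^λ₁₂ = U^λ₁₂ Uˣ₂₃` on `H^λ ⊗ H^λ ⊗ Hˣ`. -/
theorem left_absorber_antimultiplicative
    (C : HSTC.{u}) {Λ : Type u} [AddCommGroup Λ] [Module ℂ Λ] (B : NLA C Λ) :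
    letI Ul : (Λ ⊗[ℂ] Λ) ≃ₗ[ℂ] (Λ ⊗[ℂ] Λ) := B.U Λ B.slam
    (endTail Ul * extL Ul = extL Ul * stepMid Ul * endTail Ul)
    ∧ (∀ (X : Type u) [AddCommGroup X] [Module ℂ X] (s : C.S X),
        extL (B.U X s) * stepMid (B.U X s) * endTail Ul
          = endTail Ul * extL (B.U X s)) := by
  refine ⟨(left_absorber_key C B Λ B.slam).symm, fun X _ _ s => left_absorber_key C B X s⟩
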